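/- Let 1 ≤ p < ∞, let A : ℝ → ℝ be A(x) = αx with α a nonzero integer, and let Λ be a summability kernel for L^p(ℝ) multipliers. Then Λ ∘ A is also a summability kernel for L^p(ℝ) multipliers. -/

import Mathlib

open MeasureTheory Complex Real FourierTransform Filter

theorem Real.fact_zero_lt_one : Fact ((0 : ℝ) < 1) :=
  ⟨zero_lt_one⟩

attribute [local instance] Real.fact_zero_lt_one

noncomputable section

/-- `m : ℝ → ℂ` is a Fourier multiplier of `L^p(ℝ)` with constant `C`:
for every `f ∈ L¹ ∩ L^p` whose image `m · 𝓕 f` is integrable, the inverse Fourier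
transform of `m · 𝓕 f` has `L^p` norm at most `C` times that of `f`. -/
def IsMultiplierR (p : ℝ) (m : ℝ → ℂ) (C : ℝ) : Prop :=
  ∀ f : ℝ → ℂ, Integrable f volume → MemLp f (ENNReal.ofReal p) volume →
    Integrable (fun ξ => m ξ * 𝓕 f ξ) volume →
    eLpNorm (𝓕⁻ (fun ξ => m ξ * 𝓕 f ξ)) (ENNReal.ofReal p) volume ≤
      ENNReal.ofReal C * eLpNorm f (ENNReal.ofReal p) volume

/-- `φ : ℤ → ℂ` is a Fourier multiplier of `L^p(𝕋)` with constant `C`, tested on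
trigonometric polynomials. -/
def IsMultiplierT (p : ℝ) (φ : ℤ → ℂ) (C : ℝ) : Prop :=
  ∀ a : ℤ → ℂ, (Function.support a).Finite →
    eLpNorm (fun t : AddCircle (1 : ℝ) => ∑' n : ℤ, φ n * a n * fourier n t)
        (ENNReal.ofReal p) volume ≤
      ENNReal.ofReal C *
        eLpNorm (fun t : AddCircle (1 : ℝ) => ∑' n : ℤ, a n * fourier n t)
          (ENNReal.ofReal p) volume

/-- `Λ` is a summability kernel for `L^p(ℝ)` multipliers with constant `C`. -/
def SummabilityKernel (p : ℝ) (Λ : ℝ → ℂ) (C : ℝ) : Prop :=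
  ∀ φ : ℤ → ℂ, ∀ Cφ : ℝ, 0 ≤ Cφ → IsMultiplierT p φ Cφ →
    (∀ᵐ ξ : ℝ ∂volume, Summable fun n : ℤ => φ n * Λ (ξ - (n : ℝ))) ∧
    IsMultiplierR p (fun ξ => ∑' n : ℤ, φ n * Λ (ξ - (n : ℝ))) (C * Cφ)

end

noncomputable section

/-! ### Auxiliary lemmas: dilation on the real line -/

lemma fourier_dilate (f : ℝ → ℂ) {c : ℝ} (hc : c ≠ 0) (ξ : ℝ) :
    𝓕 (fun x => f (c * x)) ξ = |c⁻¹| • 𝓕 f (ξ / c) := by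
  rw [Real.fourier_real_eq, Real.fourier_real_eq,
    ← MeasureTheory.Measure.integral_comp_mul_left (fun v => 𝐞 (-(v * (ξ / c))) • f v) c]
  refine integral_congr_ae (Filter.Eventually.of_forall fun x => ?_)
  have : c * x * (ξ / c) = x * ξ := by field_simp
  simp [this]

lemma fourierInv_dilate (f : ℝ → ℂ) {c : ℝ} (hc : c ≠ 0) (x : ℝ) :
    𝓕⁻ (fun ξ => f (c * ξ)) x = |c⁻¹| • 𝓕⁻ f (x / c) := by
  rw [Real.fourierInv_eq_fourier_neg,
    Real.fourierInv_eq_fourier_neg, fourier_dilate f hc, neg_div]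

lemma fourierInv_const_mul (c : ℂ) (u : ℝ → ℂ) (x : ℝ) :
    𝓕⁻ (fun ξ => c * u ξ) x = c * 𝓕⁻ u x := by
  rw [Real.fourierInv_eq, Real.fourierInv_eq, ← integral_const_mul]
  refine integral_congr_ae (Filter.Eventually.of_forall fun v => ?_)
  simp [Circle.smul_def]; ring

lemma eLpNorm_comp_mul_left (u : ℝ → ℂ) (hu : AEStronglyMeasurable u (volume : Measure ℝ))
    {q : ENNReal} (hq : q ≠ ⊤) {c : ℝ} (hc : c ≠ 0) :
    eLpNorm (fun x => u (c * x)) q volume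
      = (ENNReal.ofReal |c⁻¹|) ^ (1 / q).toReal * eLpNorm u q volume := by
  have hmap : Measure.map (fun x : ℝ => c * x) volume = ENNReal.ofReal |c⁻¹| • volume :=
    Real.map_volume_mul_left hc
  have h1 : eLpNorm (u ∘ fun x : ℝ => c * x) q volume
      = eLpNorm u q (Measure.map (fun x : ℝ => c * x) volume) := by
    refine (eLpNorm_map_measure ?_ (measurable_const_mul c).aemeasurable).symm
    rw [hmap]
    exact hu.smul_measure _
  calc eLpNorm (fun x => u (c * x)) q volume
      = eLpNorm u q (ENNReal.ofReal |c⁻¹| • volume) := by rw [← hmap, ← h1]; rfl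
    _ = (ENNReal.ofReal |c⁻¹|) ^ (1 / q).toReal * eLpNorm u q volume := by
        rw [eLpNorm_smul_measure_of_ne_top hq]; rfl

lemma isMultiplierR_dilate {p : ℝ} {m : ℝ → ℂ} {K : ℝ} {c : ℝ} (hc : c ≠ 0)
    (hm : IsMultiplierR p m K) : IsMultiplierR p (fun ξ => m (c * ξ)) K := by
  intro f hf1 hfp hint
  set q := ENNReal.ofReal p with hqdef
  have hq : q ≠ ⊤ := ENNReal.ofReal_ne_top
  set κ : ENNReal := (ENNReal.ofReal |c⁻¹|) ^ (1 / q).toReal with hκdef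
  have hκ0 : κ ≠ 0 :=
    (ENNReal.rpow_pos (ENNReal.ofReal_pos.2 (abs_pos.2 (inv_ne_zero hc)))
      ENNReal.ofReal_ne_top).ne'
  have hκt : κ ≠ ⊤ := ENNReal.rpow_ne_top_of_nonneg ENNReal.toReal_nonneg ENNReal.ofReal_ne_top
  set G : ℝ → ℂ := fun ξ => m (c * ξ) * 𝓕 f ξ with hGdef
  have hGint : Integrable G volume := hint
  set g : ℝ → ℂ := fun x => f (c * x) with hgdef
  have hg1 : Integrable g volume := hf1.comp_mul_left' hc
  have hmap : Measure.map (fun x : ℝ => c * x) volume = ENNReal.ofReal |c⁻¹| • volume :=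
    Real.map_volume_mul_left hc
  have hgsm : AEStronglyMeasurable g volume := by
    have : AEStronglyMeasurable f (Measure.map (fun x : ℝ => c * x) volume) := by
      rw [hmap]; exact hfp.1.smul_measure _
    exact this.comp_measurable (measurable_const_mul c)
  have hgnorm : eLpNorm g q volume = κ * eLpNorm f q volume :=
    eLpNorm_comp_mul_left f hfp.1 hq hc
  have hgp : MemLp g q volume := by
    refine ⟨hgsm, ?_⟩
    rw [hgnorm]
    exact ENNReal.mul_lt_top hκt.lt_top hfp.2
  have I1 : (fun ξ => m ξ * 𝓕 g ξ) = fun ξ => ((|c⁻¹| : ℝ) : ℂ) * G (c⁻¹ * ξ) := by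
    funext ξ
    have h2 : 𝓕 g ξ = |c⁻¹| • 𝓕 f (ξ / c) := fourier_dilate f hc ξ
    have h3 : c * (c⁻¹ * ξ) = ξ := by field_simp
    calc m ξ * 𝓕 g ξ = m ξ * (↑|c⁻¹| * 𝓕 f (c⁻¹ * ξ)) := by
          rw [h2, Complex.real_smul, div_eq_inv_mul]
      _ = ↑|c⁻¹| * (m (c * (c⁻¹ * ξ)) * 𝓕 f (c⁻¹ * ξ)) := by rw [h3]; ring
      _ = ↑|c⁻¹| * G (c⁻¹ * ξ) := rfl
  have hGg : Integrable (fun ξ => m ξ * 𝓕 g ξ) volume := by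
    rw [I1]
    exact (hGint.comp_mul_left' (inv_ne_zero hc)).const_mul _
  have hle := hm g hg1 hgp hGg
  have I2 : 𝓕⁻ (fun ξ => m ξ * 𝓕 g ξ) = fun x => 𝓕⁻ G (c * x) := by
    funext x
    rw [I1, fourierInv_const_mul, fourierInv_dilate G (inv_ne_zero hc) x]
    have h6 : x / c⁻¹ = c * x := by rw [div_eq_mul_inv, inv_inv, mul_comm]
    rw [h6, inv_inv, Complex.real_smul, ← mul_assoc, ← Complex.ofReal_mul,
      abs_inv, inv_mul_cancel₀ (abs_ne_zero.2 hc), Complex.ofReal_one, one_mul]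
  have hcontG : Continuous (𝓕⁻ G) := by
    have hL : Continuous fun pq : ℝ × ℝ => (-(innerₗ ℝ)) pq.1 pq.2 := by
      have : (fun pq : ℝ × ℝ => (-(innerₗ ℝ)) pq.1 pq.2) = fun pq : ℝ × ℝ => -(pq.1 * pq.2) := by
        funext pq; simp [real_inner_comm]; ring
      rw [this]; exact (continuous_fst.mul continuous_snd).neg
    exact VectorFourier.fourierIntegral_continuous Real.continuous_fourierChar hL hGint
  have lhs_eq : eLpNorm (𝓕⁻ (fun ξ => m ξ * 𝓕 g ξ)) q volume
      = κ * eLpNorm (𝓕⁻ G) q volume := by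
    rw [I2]
    exact eLpNorm_comp_mul_left (𝓕⁻ G) hcontG.aestronglyMeasurable hq hc
  rw [lhs_eq, hgnorm, mul_left_comm] at hle
  exact (ENNReal.mul_le_mul_iff_right hκ0 hκt).1 hle

/-! ### Auxiliary lemmas: the circle -/

lemma fourier_pt_add {T : ℝ} (n : ℤ) (x y : AddCircle T) :
    fourier n (x + y) = fourier n x * fourier n y := by
  rw [fourier_apply, fourier_apply, fourier_apply, smul_add, AddCircle.toCircle_add,
    Circle.coe_mul]

lemma fourier_pt_zsmul {T : ℝ} (n β : ℤ) (t : AddCircle T) :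
    fourier n (β • t) = fourier (β * n) t := by
  rw [fourier_apply, fourier_apply, smul_smul, mul_comm n β]

lemma char_sum (k : ℕ) (hk : 0 < k) (m : ℤ) :
    ∑ j ∈ Finset.range k, fourier m (((j : ℝ) / (k : ℝ) : ℝ) : AddCircle (1:ℝ))
      = if (k : ℤ) ∣ m then (k : ℂ) else 0 := by
  have hkC : ((k : ℂ)) ≠ 0 := Nat.cast_ne_zero.2 hk.ne'
  have h2πI : (2 * (π:ℂ) * Complex.I) ≠ 0 := by
    simp [Real.pi_ne_zero, Complex.I_ne_zero]
  set ζ : ℂ := Complex.exp (2 * π * Complex.I * m / k) with hζ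
  have hterm : ∀ j ∈ Finset.range k,
      (fourier m (((j : ℝ) / (k : ℝ) : ℝ) : AddCircle (1:ℝ)) : ℂ) = ζ ^ j := by
    intro j _
    rw [fourier_coe_apply]
    rw [hζ, ← Complex.exp_nat_mul]
    congr 1
    push_cast
    field_simp
  rw [Finset.sum_congr rfl hterm]
  by_cases hdvd : (k : ℤ) ∣ m
  · obtain ⟨l, rfl⟩ := hdvd
    have harg : 2 * (π:ℂ) * Complex.I * (((k : ℤ) * l : ℤ) : ℂ) / k
        = (l : ℂ) * (2 * π * Complex.I) := by
      push_cast
      field_simp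
    have hζ1 : ζ = 1 := by
      rw [hζ, harg]
      exact Complex.exp_int_mul_two_pi_mul_I l
    rw [if_pos (dvd_mul_right ((k:ℤ)) l)]
    simp [hζ1]
  · rw [if_neg hdvd]
    have hζk : ζ ^ k = 1 := by
      rw [hζ, ← Complex.exp_nat_mul]
      have : (k : ℂ) * (2 * π * Complex.I * m / k) = (m : ℂ) * (2 * π * Complex.I) := by
        field_simp
      rw [this]
      exact Complex.exp_int_mul_two_pi_mul_I m
    have hζne : ζ ≠ 1 := by
      intro h1
      obtain ⟨l, hl⟩ := Complex.exp_eq_one_iff.1 (hζ ▸ h1)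
      apply hdvd
      have hm : (m : ℂ) = (k : ℂ) * l := by
        field_simp at hl
        have h2 : 2 * (π:ℂ) * Complex.I * (m : ℂ)
            = 2 * (π:ℂ) * Complex.I * ((k : ℂ) * l) := by linear_combination (2 * (π:ℂ) * Complex.I) * hl
        exact mul_left_cancel₀ h2πI h2
      exact ⟨l, by exact_mod_cast hm⟩
    rw [geom_sum_eq hζne, hζk]
    simp

lemma trig_eq_sum (w : ℤ → ℂ) (s : Finset ℤ) (hs : ∀ m ∉ s, w m = 0) (t : AddCircle (1:ℝ)) :
    ∑' n, w n * fourier n t = ∑ n ∈ s, w n * fourier n t :=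
  tsum_eq_sum fun b hb => by rw [hs b hb, zero_mul]

lemma trig_cont (w : ℤ → ℂ) (s : Finset ℤ) (hs : ∀ m ∉ s, w m = 0) :
    Continuous fun t : AddCircle (1:ℝ) => ∑' n, w n * fourier n t := by
  have h : (fun t : AddCircle (1:ℝ) => ∑' n, w n * fourier n t)
      = fun t => ∑ n ∈ s, w n * fourier n t := funext fun t => trig_eq_sum w s hs t
  rw [h]
  exact continuous_finset_sum _ fun n _ => continuous_const.mul (fourier n).continuous

lemma isMultiplierT_dilate {p : ℝ} (hp : 1 ≤ p) {φ : ℤ → ℂ} {Cφ : ℝ}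
    (hφ : IsMultiplierT p φ Cφ) {α : ℤ} (hα : α ≠ 0) :
    IsMultiplierT p (fun m => if α ∣ m then φ (m / α) else 0) Cφ := by
  intro a ha
  set q := ENNReal.ofReal p with hqdef
  have hq1 : (1 : ENNReal) ≤ q := by
    rw [hqdef, ← ENNReal.ofReal_one]; exact ENNReal.ofReal_le_ofReal hp
  set ψ : ℤ → ℂ := fun m => if α ∣ m then φ (m / α) else 0 with hψdef
  have hinj : Function.Injective (fun n : ℤ => α * n) := fun x y hxy =>
    mul_left_cancel₀ hα hxy
  have hψα : ∀ n : ℤ, ψ (α * n) = φ n := fun n => by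
    simp only [hψdef, if_pos (dvd_mul_right α n), Int.mul_ediv_cancel_left n hα]
  have hψ0 : ∀ m : ℤ, ¬ α ∣ m → ψ m = 0 := fun m hm => by
    simp only [hψdef, if_neg hm]
  set b : ℤ → ℂ := fun n => a (α * n) with hbdef
  have hb : (Function.support b).Finite :=
    (ha.preimage hinj.injOn).subset fun n hn => hn
  set s := ha.toFinset with hsdef
  have hs : ∀ m, m ∉ s → a m = 0 := fun m hm => by simpa [hsdef] using hm
  set F : AddCircle (1:ℝ) → ℂ := fun t => ∑' m, a m * fourier m t with hF
  set L : AddCircle (1:ℝ) → ℂ := fun t => ∑' m, ψ m * a m * fourier m t with hL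
  set Lb : AddCircle (1:ℝ) → ℂ := fun t => ∑' n, φ n * b n * fourier n t with hLb
  set Fb : AddCircle (1:ℝ) → ℂ := fun t => ∑' n, b n * fourier n t with hFb
  set P : AddCircle (1:ℝ) → ℂ := fun t => ∑' m, (if α ∣ m then a m else 0) * fourier m t with hP
  have contF : Continuous F := trig_cont a s hs
  have contLb : Continuous Lb :=
    trig_cont (fun n => φ n * b n) hb.toFinset
      (fun m hm => by
        have hbm : b m = 0 := by simpa using hm
        show φ m * b m = 0
        rw [hbm, mul_zero])
  have contFb : Continuous Fb := trig_cont b hb.toFinset (fun m hm => by simpa using hm)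
  have hzsmulMP : MeasurePreserving (fun t : AddCircle (1:ℝ) => α • t) volume volume :=
    Measure.measurePreserving_zsmul volume hα
  have step1 : L = Lb ∘ fun t => α • t := by
    funext t
    have hsupp : (Function.support fun m => ψ m * a m * fourier m t)
        ⊆ Set.range fun n : ℤ => α * n := by
      intro m hm
      by_cases hd : α ∣ m
      · obtain ⟨n, rfl⟩ := hd; exact ⟨n, rfl⟩
      · exact absurd (show ψ m * a m * fourier m t = 0 by
          rw [hψ0 m hd, zero_mul, zero_mul]) hm
    calc L t = ∑' m, ψ m * a m * fourier m t := rfl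
      _ = ∑' n, ψ (α * n) * a (α * n) * fourier (α * n) t := (hinj.tsum_eq hsupp).symm
      _ = ∑' n, φ n * b n * fourier n (α • t) :=
          tsum_congr fun n => by rw [hψα, fourier_pt_zsmul]
      _ = (Lb ∘ fun t => α • t) t := rfl
  have step2 : eLpNorm L q volume = eLpNorm Lb q volume := by
    rw [step1]
    exact eLpNorm_comp_measurePreserving contLb.aestronglyMeasurable hzsmulMP
  have step3 : eLpNorm Lb q volume ≤ ENNReal.ofReal Cφ * eLpNorm Fb q volume := hφ b hb
  have step4 : (Fb ∘ fun t => α • t) = P := by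
    funext t
    have hsupp2 : (Function.support fun m => (if α ∣ m then a m else 0) * fourier m t)
        ⊆ Set.range fun n : ℤ => α * n := by
      intro m hm
      by_cases hd : α ∣ m
      · obtain ⟨n, rfl⟩ := hd; exact ⟨n, rfl⟩
      · exact absurd (show (if α ∣ m then a m else 0) * fourier m t = 0 by
          rw [if_neg hd, zero_mul]) hm
    calc (Fb ∘ fun t => α • t) t = ∑' n, b n * fourier n (α • t) := rfl
      _ = ∑' n, (if α ∣ α * n then a (α * n) else 0) * fourier (α * n) t :=
          tsum_congr fun n => by rw [if_pos (dvd_mul_right α n), fourier_pt_zsmul]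
      _ = P t := hinj.tsum_eq hsupp2
  have step4' : eLpNorm P q volume = eLpNorm Fb q volume := by
    rw [← step4]
    exact eLpNorm_comp_measurePreserving contFb.aestronglyMeasurable hzsmulMP
  set k := α.natAbs with hkdef
  have hk : 0 < k := Int.natAbs_pos.2 hα
  have hkC : ((k : ℂ)) ≠ 0 := Nat.cast_ne_zero.2 hk.ne'
  set cj : ℕ → AddCircle (1:ℝ) := fun j => (((j : ℝ) / (k : ℝ) : ℝ) : AddCircle (1:ℝ)) with hcj
  have hFsum : ∀ u : AddCircle (1:ℝ), F u = ∑ m ∈ s, a m * fourier m u := fun u =>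
    trig_eq_sum a s hs u
  have I5 : P = fun t => ((k : ℂ))⁻¹ * ∑ j ∈ Finset.range k, F (t + cj j) := by
    funext t
    have hPt : P t = ∑ m ∈ s, (if α ∣ m then a m else 0) * fourier m t :=
      trig_eq_sum _ s (fun m hm => by rw [hs m hm]; simp) t
    have hswap : ∑ j ∈ Finset.range k, F (t + cj j)
        = ∑ m ∈ s, a m * fourier m t * (if (k : ℤ) ∣ m then (k : ℂ) else 0) := by
      have : ∀ j ∈ Finset.range k, F (t + cj j)
          = ∑ m ∈ s, a m * fourier m t * fourier m (cj j) := fun j _ => by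
        rw [hFsum]
        exact Finset.sum_congr rfl fun m _ => by rw [fourier_pt_add]; ring
      rw [Finset.sum_congr rfl this, Finset.sum_comm]
      refine Finset.sum_congr rfl fun m _ => ?_
      rw [← Finset.mul_sum, char_sum k hk m]
    rw [hPt, hswap, Finset.mul_sum]
    refine Finset.sum_congr rfl fun m _ => ?_
    by_cases hd : α ∣ m
    · rw [if_pos hd, if_pos (Int.natAbs_dvd.2 hd)]
      field_simp
    · rw [if_neg hd, if_neg (fun hc => hd (Int.natAbs_dvd.1 hc))]
      ring
  have I5' : P = ((k : ℂ))⁻¹ • ∑ j ∈ Finset.range k, (fun t => F (t + cj j)) := by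
    rw [I5]
    funext t
    simp [Finset.sum_apply, smul_eq_mul]
  have htrans : ∀ j, eLpNorm (fun t => F (t + cj j)) q volume = eLpNorm F q volume := fun j =>
    eLpNorm_comp_measurePreserving (g := F) (f := fun t => t + cj j) contF.aestronglyMeasurable
      (measurePreserving_add_right volume (cj j))
  have step5 : eLpNorm P q volume ≤ eLpNorm F q volume := by
    rw [I5', eLpNorm_const_smul]
    have hsum_le : eLpNorm (∑ j ∈ Finset.range k, fun t => F (t + cj j)) q volume
        ≤ ∑ j ∈ Finset.range k, eLpNorm (fun t => F (t + cj j)) q volume :=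
      eLpNorm_sum_le
        (fun j _ => (contF.comp (continuous_add_right (cj j))).aestronglyMeasurable) hq1
    have hsum_eq : ∑ j ∈ Finset.range k, eLpNorm (fun t => F (t + cj j)) q volume
        = (k : ENNReal) * eLpNorm F q volume := by
      rw [Finset.sum_congr rfl fun j _ => htrans j, Finset.sum_const, Finset.card_range,
        nsmul_eq_mul]
    have hnn : (‖((k : ℂ))⁻¹‖₊ : ENNReal) = ((k : ENNReal))⁻¹ := by
      rw [nnnorm_inv]
      simp only [Complex.nnnorm_natCast]
      rw [ENNReal.coe_inv (by exact_mod_cast hk.ne')]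
      norm_cast
    calc (‖((k : ℂ))⁻¹‖₊ : ENNReal)
          * eLpNorm (∑ j ∈ Finset.range k, fun t => F (t + cj j)) q volume
        ≤ (‖((k : ℂ))⁻¹‖₊ : ENNReal) * ((k : ENNReal) * eLpNorm F q volume) :=
          mul_le_mul_right (le_trans hsum_le (le_of_eq hsum_eq)) _
      _ = eLpNorm F q volume := by
          rw [hnn, ← mul_assoc, ENNReal.inv_mul_cancel (by exact_mod_cast hk.ne')
            (ENNReal.natCast_ne_top k), one_mul]
  calc eLpNorm L q volume = eLpNorm Lb q volume := step2
    _ ≤ ENNReal.ofReal Cφ * eLpNorm Fb q volume := step3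
    _ = ENNReal.ofReal Cφ * eLpNorm P q volume := by rw [step4']
    _ ≤ ENNReal.ofReal Cφ * eLpNorm F q volume := mul_le_mul_right step5 _

/-- If `Λ` is a summability kernel for `L^p(ℝ)` multipliers and `A(x) = αx` with
`α` a nonzero integer, then `Λ ∘ A` is also a summability kernel for `L^p(ℝ)`
multipliers. -/
theorem stmt18 (p : ℝ) (hp : 1 ≤ p) (α : ℤ) (hα : α ≠ 0) (Λ : ℝ → ℂ) (C : ℝ)
    (h : SummabilityKernel p Λ C) :
    ∃ C' : ℝ, SummabilityKernel p (fun ξ => Λ ((α : ℝ) * ξ)) C' := by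
  refine ⟨C, ?_⟩
  intro φ Cφ hCφ0 hφ
  have hαR : ((α : ℝ)) ≠ 0 := Int.cast_ne_zero.2 hα
  set ψ : ℤ → ℂ := fun m => if α ∣ m then φ (m / α) else 0 with hψdef
  have hψmul : IsMultiplierT p ψ Cφ := isMultiplierT_dilate hp hφ hα
  obtain ⟨hae, hmul⟩ := h ψ Cφ hCφ0 hψmul
  have hinj : Function.Injective (fun n : ℤ => α * n) := fun x y hxy =>
    mul_left_cancel₀ hα hxy
  have hψα : ∀ n : ℤ, ψ (α * n) = φ n := fun n => by
    simp only [hψdef, if_pos (dvd_mul_right α n), Int.mul_ediv_cancel_left n hα]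
  have hψ0 : ∀ m : ℤ, ¬ α ∣ m → ψ m = 0 := fun m hm => by
    simp only [hψdef, if_neg hm]
  have hcast : ∀ (ξ : ℝ) (n : ℤ), (α : ℝ) * ξ - ((α * n : ℤ) : ℝ) = (α : ℝ) * (ξ - (n : ℝ)) := by
    intro ξ n; push_cast; ring
  constructor
  · -- a.e. summability
    have hembed : MeasurableEmbedding (fun ξ : ℝ => (α : ℝ) * ξ) :=
      (Homeomorph.mulLeft₀ ((α : ℝ)) hαR).measurableEmbedding
    have h1 : ∀ᵐ ξ : ℝ ∂(Measure.map (fun ξ : ℝ => (α : ℝ) * ξ) volume),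
        Summable fun m : ℤ => ψ m * Λ (ξ - (m : ℝ)) := by
      rw [Real.map_volume_mul_left hαR]
      exact Measure.ae_smul_measure hae _
    have h2 := hembed.ae_map_iff.1 h1
    refine h2.mono fun ξ hξ => ?_
    have h3 := hξ.comp_injective hinj
    refine h3.congr fun n => ?_
    show ψ (α * n) * Λ ((α : ℝ) * ξ - ((α * n : ℤ) : ℝ)) = φ n * Λ ((α : ℝ) * (ξ - (n : ℝ)))
    rw [hψα, hcast]
  · -- the multiplier bound
    have hfe : (fun ξ : ℝ => ∑' n : ℤ, φ n * Λ ((α : ℝ) * (ξ - (n : ℝ))))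
        = fun ξ : ℝ => ∑' m : ℤ, ψ m * Λ ((α : ℝ) * ξ - (m : ℝ)) := by
      funext ξ
      have hsupp : (Function.support fun m : ℤ => ψ m * Λ ((α : ℝ) * ξ - (m : ℝ)))
          ⊆ Set.range fun n : ℤ => α * n := by
        intro m hm
        by_cases hd : α ∣ m
        · obtain ⟨n, rfl⟩ := hd; exact ⟨n, rfl⟩
        · exact absurd (show ψ m * Λ ((α : ℝ) * ξ - (m : ℝ)) = 0 by
            rw [hψ0 m hd, zero_mul]) hm
      calc ∑' n : ℤ, φ n * Λ ((α : ℝ) * (ξ - (n : ℝ)))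
          = ∑' n : ℤ, ψ (α * n) * Λ ((α : ℝ) * ξ - ((α * n : ℤ) : ℝ)) :=
            tsum_congr fun n => by rw [hψα, hcast]
        _ = ∑' m : ℤ, ψ m * Λ ((α : ℝ) * ξ - (m : ℝ)) := hinj.tsum_eq hsupp
    show IsMultiplierR p (fun ξ : ℝ => ∑' n : ℤ, φ n * Λ ((α : ℝ) * (ξ - (n : ℝ)))) (C * Cφ)
    rw [hfe]
    exact isMultiplierR_dilate hαR hmul

end
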